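/- Final Hessian bound in the proof of Theorem 1: let L = ∑_{j=1}^m (3‖b_j‖₂⁴ + 3‖a_j‖₂⁴ + ‖b_j‖₂²‖a_j‖₂² + |y_j|²‖b_j‖₂² + ‖a_j‖₂²). Then for all h, u ∈ ℝ^{d₁} and x, v ∈ ℝ^{d₂}: ∑_{j=1}^m (2|(Bh)_j|² + |(Ax)_j|² + |y_j|²)|(Bu)_j|² + Re ∑_{j=1}^m conj((Bu)_j)²·(Bh)_j² + ∑_{j=1}^m (|(Bh)_j|² + 2|(Ax)_j|² + 1)|(Av)_j|² + Re ∑_{j=1}^m conj((Av)_j)²·(Ax)_j² + 2·Re ∑_{j=1}^m [ conj((Bu)_j (Av)_j)·(Bh)_j (Ax)_j + conj((Bu)_j)·(Av)_j·(Bh)_j·conj((Ax)_j) ] ≤ L·(‖h‖₂² + ‖x‖₂² + 1)·(‖u‖₂² + ‖v‖₂²). -/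

import Mathlib

open Finset

/-- Complexification of a real vector followed by matrix-vector multiplication. -/
noncomputable def cMulVec {m d : ℕ} (M : Matrix (Fin m) (Fin d) ℂ) (h : Fin d → ℝ) :
    Fin m → ℂ :=
  M.mulVec fun i => (h i : ℂ)

/-- Squared Euclidean norm `‖bⱼ‖₂²` of the conjugate transpose of the `j`-th row of `M`. -/
noncomputable def rowNormSq {m d : ℕ} (M : Matrix (Fin m) (Fin d) ℂ) (j : Fin m) : ℝ :=
  ∑ i, ‖M j i‖ ^ 2

lemma cs_row {m d : ℕ} (M : Matrix (Fin m) (Fin d) ℂ) (w : Fin d → ℝ) (j : Fin m) :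
    ‖cMulVec M w j‖ ^ 2 ≤ rowNormSq M j * ∑ i, w i ^ 2 := by
  have h1 : ‖cMulVec M w j‖ ≤ ∑ i, ‖M j i‖ * |w i| := by
    have e : cMulVec M w j = ∑ i, M j i * (w i : ℂ) := by
      simp [cMulVec, Matrix.mulVec, dotProduct]
    rw [e]
    refine (norm_sum_le _ _).trans (le_of_eq ?_)
    simp [norm_mul, Complex.norm_real]
  calc ‖cMulVec M w j‖ ^ 2
      ≤ (∑ i, ‖M j i‖ * |w i|) ^ 2 := by
        exact pow_le_pow_left₀ (norm_nonneg _) h1 2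
    _ ≤ (∑ i, ‖M j i‖ ^ 2) * ∑ i, |w i| ^ 2 :=
        Finset.sum_mul_sq_le_sq_mul_sq _ _ _
    _ = rowNormSq M j * ∑ i, w i ^ 2 := by simp [rowNormSq, sq_abs]

set_option maxHeartbeats 1000000 in
lemma key_ptwise (Nb Na Y H X U V b a bu av : ℝ)
    (hNb : 0 ≤ Nb) (hNa : 0 ≤ Na) (hY : 0 ≤ Y) (hH : 0 ≤ H) (hX : 0 ≤ X)
    (hU : 0 ≤ U) (hV : 0 ≤ V)
    (h1 : b ^ 2 ≤ Nb * H) (h2 : bu ^ 2 ≤ Nb * U) (h3 : a ^ 2 ≤ Na * X)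
    (h4 : av ^ 2 ≤ Na * V) :
    (2 * b ^ 2 + a ^ 2 + Y) * bu ^ 2 + bu ^ 2 * b ^ 2
      + (b ^ 2 + 2 * a ^ 2 + 1) * av ^ 2 + av ^ 2 * a ^ 2 + 4 * (bu * av * b * a)
      ≤ (3 * Nb ^ 2 + 3 * Na ^ 2 + Nb * Na + Y * Nb + Na) * (H + X + 1) * (U + V) := by
  set L₀ := 3 * Nb ^ 2 + 3 * Na ^ 2 + Nb * Na + Y * Nb + Na with hL₀
  have e0 : 4 * (bu * av * b * a) ≤ 2 * (bu ^ 2 * a ^ 2) + 2 * (av ^ 2 * b ^ 2) := by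
    nlinarith [sq_nonneg (bu * a - av * b)]
  have hYNb : 0 ≤ Y * Nb := mul_nonneg hY hNb
  have hNbNa : 0 ≤ Nb * Na := mul_nonneg hNb hNa
  have hLb : 3 * Nb ^ 2 ≤ L₀ := by nlinarith [sq_nonneg Na]
  have hLa : 3 * Na ^ 2 ≤ L₀ := by nlinarith [sq_nonneg Nb]
  have hLm : 3 * (Na * Nb) ≤ L₀ := by nlinarith [sq_nonneg (Na - Nb)]
  have hLy : Y * Nb ≤ L₀ := by nlinarith [sq_nonneg Na, sq_nonneg Nb]
  have hLn : Na ≤ L₀ := by nlinarith [sq_nonneg Na, sq_nonneg Nb]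
  have g1 : 3 * (b ^ 2 * bu ^ 2) ≤ L₀ * (H * U) := by
    have := mul_le_mul h1 h2 (sq_nonneg bu) (by positivity : (0:ℝ) ≤ Nb * H)
    calc 3 * (b ^ 2 * bu ^ 2) ≤ 3 * ((Nb * H) * (Nb * U)) := by linarith
      _ = (3 * Nb ^ 2) * (H * U) := by ring
      _ ≤ L₀ * (H * U) := mul_le_mul_of_nonneg_right hLb (mul_nonneg hH hU)
  have g2 : 3 * (a ^ 2 * bu ^ 2) ≤ L₀ * (X * U) := by
    have := mul_le_mul h3 h2 (sq_nonneg bu) (by positivity : (0:ℝ) ≤ Na * X)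
    calc 3 * (a ^ 2 * bu ^ 2) ≤ 3 * ((Na * X) * (Nb * U)) := by linarith
      _ = (3 * (Na * Nb)) * (X * U) := by ring
      _ ≤ L₀ * (X * U) := mul_le_mul_of_nonneg_right hLm (mul_nonneg hX hU)
  have g3 : Y * bu ^ 2 ≤ L₀ * U := by
    calc Y * bu ^ 2 ≤ Y * (Nb * U) := mul_le_mul_of_nonneg_left h2 hY
      _ = (Y * Nb) * U := by ring
      _ ≤ L₀ * U := mul_le_mul_of_nonneg_right hLy hU
  have g4 : 3 * (b ^ 2 * av ^ 2) ≤ L₀ * (H * V) := by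
    have := mul_le_mul h1 h4 (sq_nonneg av) (by positivity : (0:ℝ) ≤ Nb * H)
    calc 3 * (b ^ 2 * av ^ 2) ≤ 3 * ((Nb * H) * (Na * V)) := by linarith
      _ = (3 * (Na * Nb)) * (H * V) := by ring
      _ ≤ L₀ * (H * V) := mul_le_mul_of_nonneg_right hLm (mul_nonneg hH hV)
  have g5 : 3 * (a ^ 2 * av ^ 2) ≤ L₀ * (X * V) := by
    have := mul_le_mul h3 h4 (sq_nonneg av) (by positivity : (0:ℝ) ≤ Na * X)
    calc 3 * (a ^ 2 * av ^ 2) ≤ 3 * ((Na * X) * (Na * V)) := by linarith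
      _ = (3 * Na ^ 2) * (X * V) := by ring
      _ ≤ L₀ * (X * V) := mul_le_mul_of_nonneg_right hLa (mul_nonneg hX hV)
  have g6 : av ^ 2 ≤ L₀ * V := by
    calc av ^ 2 ≤ Na * V := h4
      _ ≤ L₀ * V := mul_le_mul_of_nonneg_right hLn hV
  have expand : L₀ * (H + X + 1) * (U + V)
      = L₀ * (H * U) + L₀ * (X * U) + L₀ * U + L₀ * (H * V) + L₀ * (X * V) + L₀ * V := by
    ring
  have lhs_eq : (2 * b ^ 2 + a ^ 2 + Y) * bu ^ 2 + bu ^ 2 * b ^ 2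
      + (b ^ 2 + 2 * a ^ 2 + 1) * av ^ 2 + av ^ 2 * a ^ 2 + 4 * (bu * av * b * a)
      = 3 * (b ^ 2 * bu ^ 2) + 3 * (a ^ 2 * bu ^ 2) + Y * bu ^ 2 + 3 * (b ^ 2 * av ^ 2)
        + 3 * (a ^ 2 * av ^ 2) + av ^ 2
        + (4 * (bu * av * b * a) - 2 * (bu ^ 2 * a ^ 2) - 2 * (av ^ 2 * b ^ 2)) := by
    ring
  rw [lhs_eq, expand]
  linarith [g1, g2, g3, g4, g5, g6, e0]

/-- Final Hessian bound in the proof of Theorem 1: the quadratic form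
`⟨(u,v), ∇²F₁(h,x)(u,v)⟩` is bounded by `L (‖h‖₂² + ‖x‖₂² + 1)(‖u‖₂² + ‖v‖₂²)`. -/
theorem hessian_quadratic_form_bound {m d₁ d₂ : ℕ} (hm : 0 < m) (hd₁ : 0 < d₁) (hd₂ : 0 < d₂)
    (B : Matrix (Fin m) (Fin d₁) ℂ) (A : Matrix (Fin m) (Fin d₂) ℂ) (y : Fin m → ℂ)
    (L : ℝ)
    (hL : L = ∑ j, (3 * rowNormSq B j ^ 2 + 3 * rowNormSq A j ^ 2
        + rowNormSq B j * rowNormSq A j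
        + ‖y j‖ ^ 2 * rowNormSq B j + rowNormSq A j))
    (h u : Fin d₁ → ℝ) (x v : Fin d₂ → ℝ) :
    ∑ j, (2 * ‖cMulVec B h j‖ ^ 2 + ‖cMulVec A x j‖ ^ 2
          + ‖y j‖ ^ 2) * ‖cMulVec B u j‖ ^ 2
      + (∑ j, (starRingEnd ℂ) (cMulVec B u j) ^ 2 * cMulVec B h j ^ 2).re
      + ∑ j, (‖cMulVec B h j‖ ^ 2 + 2 * ‖cMulVec A x j‖ ^ 2 + 1)
          * ‖cMulVec A v j‖ ^ 2
      + (∑ j, (starRingEnd ℂ) (cMulVec A v j) ^ 2 * cMulVec A x j ^ 2).re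
      + 2 * (∑ j, ((starRingEnd ℂ) (cMulVec B u j * cMulVec A v j)
            * (cMulVec B h j * cMulVec A x j)
          + (starRingEnd ℂ) (cMulVec B u j) * cMulVec A v j * cMulVec B h j
            * (starRingEnd ℂ) (cMulVec A x j))).re
      ≤ L * (∑ i, h i ^ 2 + ∑ i, x i ^ 2 + 1) * (∑ i, u i ^ 2 + ∑ i, v i ^ 2) := by
  have main : ∀ j : Fin m,
      (2 * ‖cMulVec B h j‖ ^ 2 + ‖cMulVec A x j‖ ^ 2
          + ‖y j‖ ^ 2) * ‖cMulVec B u j‖ ^ 2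
        + ((starRingEnd ℂ) (cMulVec B u j) ^ 2 * cMulVec B h j ^ 2).re
        + (‖cMulVec B h j‖ ^ 2 + 2 * ‖cMulVec A x j‖ ^ 2 + 1)
            * ‖cMulVec A v j‖ ^ 2
        + ((starRingEnd ℂ) (cMulVec A v j) ^ 2 * cMulVec A x j ^ 2).re
        + 2 * (((starRingEnd ℂ) (cMulVec B u j * cMulVec A v j)
              * (cMulVec B h j * cMulVec A x j)
            + (starRingEnd ℂ) (cMulVec B u j) * cMulVec A v j * cMulVec B h j
              * (starRingEnd ℂ) (cMulVec A x j))).re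
        ≤ (3 * rowNormSq B j ^ 2 + 3 * rowNormSq A j ^ 2
            + rowNormSq B j * rowNormSq A j
            + ‖y j‖ ^ 2 * rowNormSq B j + rowNormSq A j)
          * (∑ i, h i ^ 2 + ∑ i, x i ^ 2 + 1) * (∑ i, u i ^ 2 + ∑ i, v i ^ 2) := by
    intro j
    set b := ‖cMulVec B h j‖ with hbdef
    set a := ‖cMulVec A x j‖ with hadef
    set bu := ‖cMulVec B u j‖ with hbudef
    set av := ‖cMulVec A v j‖ with havdef
    have r1 : ((starRingEnd ℂ) (cMulVec B u j) ^ 2 * cMulVec B h j ^ 2).re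
        ≤ bu ^ 2 * b ^ 2 := by
      refine (Complex.re_le_norm _).trans (le_of_eq ?_)
      simp [norm_mul, norm_pow, Complex.norm_conj, hbdef, hadef, hbudef, havdef]
    have r2 : ((starRingEnd ℂ) (cMulVec A v j) ^ 2 * cMulVec A x j ^ 2).re
        ≤ av ^ 2 * a ^ 2 := by
      refine (Complex.re_le_norm _).trans (le_of_eq ?_)
      simp [norm_mul, norm_pow, Complex.norm_conj, hbdef, hadef, hbudef, havdef]
    have r3 : (((starRingEnd ℂ) (cMulVec B u j * cMulVec A v j)
          * (cMulVec B h j * cMulVec A x j)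
        + (starRingEnd ℂ) (cMulVec B u j) * cMulVec A v j * cMulVec B h j
          * (starRingEnd ℂ) (cMulVec A x j))).re ≤ 2 * (bu * av * b * a) := by
      refine (Complex.re_le_norm _).trans ?_
      refine (norm_add_le _ _).trans (le_of_eq ?_)
      simp only [norm_mul, Complex.norm_conj]
      rw [hbdef, hadef, hbudef, havdef]; ring
    have c1 := cs_row B h j
    have c2 := cs_row B u j
    have c3 := cs_row A x j
    have c4 := cs_row A v j
    have hH : (0:ℝ) ≤ ∑ i, h i ^ 2 := Finset.sum_nonneg fun i _ => sq_nonneg _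
    have hX : (0:ℝ) ≤ ∑ i, x i ^ 2 := Finset.sum_nonneg fun i _ => sq_nonneg _
    have hU : (0:ℝ) ≤ ∑ i, u i ^ 2 := Finset.sum_nonneg fun i _ => sq_nonneg _
    have hV : (0:ℝ) ≤ ∑ i, v i ^ 2 := Finset.sum_nonneg fun i _ => sq_nonneg _
    have hNb : (0:ℝ) ≤ rowNormSq B j := Finset.sum_nonneg fun i _ => sq_nonneg _
    have hNa : (0:ℝ) ≤ rowNormSq A j := Finset.sum_nonneg fun i _ => sq_nonneg _
    have := key_ptwise (rowNormSq B j) (rowNormSq A j) (‖y j‖ ^ 2)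
      (∑ i, h i ^ 2) (∑ i, x i ^ 2) (∑ i, u i ^ 2) (∑ i, v i ^ 2) b a bu av
      hNb hNa (sq_nonneg _) hH hX hU hV c1 c2 c3 c4
    linarith
  calc
    _ ≤ ∑ j, (3 * rowNormSq B j ^ 2 + 3 * rowNormSq A j ^ 2
            + rowNormSq B j * rowNormSq A j
            + ‖y j‖ ^ 2 * rowNormSq B j + rowNormSq A j)
          * (∑ i, h i ^ 2 + ∑ i, x i ^ 2 + 1) * (∑ i, u i ^ 2 + ∑ i, v i ^ 2) := by
      rw [Complex.re_sum, Complex.re_sum, Complex.re_sum, Finset.mul_sum,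
        ← Finset.sum_add_distrib, ← Finset.sum_add_distrib, ← Finset.sum_add_distrib,
        ← Finset.sum_add_distrib]
      exact Finset.sum_le_sum fun j _ => main j
    _ = L * (∑ i, h i ^ 2 + ∑ i, x i ^ 2 + 1) * (∑ i, u i ^ 2 + ∑ i, v i ^ 2) := by
      rw [hL, Finset.sum_mul, Finset.sum_mul]
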